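/- Let ρ > 0, ν ∈ ℝ with cos(πν) ≠ 0, and let r' ∈ EuclideanSpace ℝ (Fin 3) be nonzero. Then ‖r − r'‖ · G_ν(r, r') tends to −1/(4π) as r tends to r' (through r ≠ r'). -/

import Mathlib

/-- The three-dimensional Maxwell fish-eye Green's function. -/
noncomputable def fisheyeGreen (ρ ν : ℝ) (r r' : EuclideanSpace ℝ (Fin 3)) : ℝ :=
  -(1 / (4 * Real.pi * Real.cos (Real.pi * ν)))
    * (Real.sqrt ((‖r‖ ^ 2 + ρ ^ 2) * (‖r'‖ ^ 2 + ρ ^ 2))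
        / (‖r - r'‖
            * Real.sqrt (‖r‖ ^ 2 * ‖r'‖ ^ 2 + 2 * ρ ^ 2 * (inner ℝ r r' : ℝ) + ρ ^ 4)))
    * Real.sin ((ν + 1 / 2)
        * Real.arccos (-1 + 2 * ρ ^ 2 * ‖r - r'‖ ^ 2
            / ((‖r‖ ^ 2 + ρ ^ 2) * (‖r'‖ ^ 2 + ρ ^ 2))))

set_option maxHeartbeats 1000000 in
private lemma fisheye_aux (x a b K S : ℝ) (hx : x ≠ 0) :
    x * (K * (a / (x * b)) * S) = K * (a / b) * S := by
  rcases eq_or_ne b 0 with hb | hb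
  · simp [hb]
  · field_simp

set_option maxHeartbeats 1000000 in
theorem fisheye_green_source_singularity
    (ρ ν : ℝ) (hρ : 0 < ρ) (hν : Real.cos (Real.pi * ν) ≠ 0)
    (r' : EuclideanSpace ℝ (Fin 3)) (hr' : r' ≠ 0) :
    Filter.Tendsto (fun r => ‖r - r'‖ * fisheyeGreen ρ ν r r')
      (nhdsWithin r' {r'}ᶜ) (nhds (-1 / (4 * Real.pi))) := by
  have hπ : Real.pi ≠ 0 := Real.pi_ne_zero
  have hcpos : 0 < ‖r'‖ ^ 2 + ρ ^ 2 := by positivity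
  set g : EuclideanSpace ℝ (Fin 3) → ℝ := fun r =>
    -(1 / (4 * Real.pi * Real.cos (Real.pi * ν)))
      * (Real.sqrt ((‖r‖ ^ 2 + ρ ^ 2) * (‖r'‖ ^ 2 + ρ ^ 2))
          / Real.sqrt (‖r‖ ^ 2 * ‖r'‖ ^ 2 + 2 * ρ ^ 2 * (inner ℝ r r' : ℝ) + ρ ^ 4))
      * Real.sin ((ν + 1 / 2)
          * Real.arccos (-1 + 2 * ρ ^ 2 * ‖r - r'‖ ^ 2
              / ((‖r‖ ^ 2 + ρ ^ 2) * (‖r'‖ ^ 2 + ρ ^ 2)))) with hg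
  have hQ : ‖r'‖ ^ 2 * ‖r'‖ ^ 2 + 2 * ρ ^ 2 * (inner ℝ r' r' : ℝ) + ρ ^ 4
      = (‖r'‖ ^ 2 + ρ ^ 2) ^ 2 := by
    rw [real_inner_self_eq_norm_sq]; ring
  have heq : ∀ r ∈ ({r'}ᶜ : Set (EuclideanSpace ℝ (Fin 3))),
      ‖r - r'‖ * fisheyeGreen ρ ν r r' = g r := by
    intro r hr
    have h0 : ‖r - r'‖ ≠ 0 := by
      simp only [ne_eq, norm_eq_zero, sub_eq_zero]; exact hr
    rw [fisheyeGreen, hg]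
    exact fisheye_aux _ _ _ _ _ h0
  -- continuity of g at r'
  have hcont : ContinuousAt g r' := by
    have hsd : Real.sqrt (‖r'‖ ^ 2 * ‖r'‖ ^ 2 + 2 * ρ ^ 2 * (inner ℝ r' r' : ℝ) + ρ ^ 4) ≠ 0 := by
      rw [hQ, Real.sqrt_sq hcpos.le]; exact hcpos.ne'
    have h1 : ContinuousAt (fun r : EuclideanSpace ℝ (Fin 3) =>
        Real.sqrt ((‖r‖ ^ 2 + ρ ^ 2) * (‖r'‖ ^ 2 + ρ ^ 2))) r' := by fun_prop
    have h2 : ContinuousAt (fun r : EuclideanSpace ℝ (Fin 3) =>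
        Real.sqrt (‖r‖ ^ 2 * ‖r'‖ ^ 2 + 2 * ρ ^ 2 * (inner ℝ r r' : ℝ) + ρ ^ 4)) r' := by
      have hinner : Continuous fun r : EuclideanSpace ℝ (Fin 3) => (inner ℝ r r' : ℝ) :=
        continuous_id.inner continuous_const
      exact (Real.continuous_sqrt.comp
        ((((continuous_norm.pow 2).mul continuous_const).add
          (continuous_const.mul hinner)).add continuous_const)).continuousAt
    have h3 : ContinuousAt (fun r : EuclideanSpace ℝ (Fin 3) =>
        -1 + 2 * ρ ^ 2 * ‖r - r'‖ ^ 2 / ((‖r‖ ^ 2 + ρ ^ 2) * (‖r'‖ ^ 2 + ρ ^ 2))) r' := by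
      apply ContinuousAt.add continuousAt_const
      apply ContinuousAt.div (by fun_prop) (by fun_prop)
      positivity
    have h4 : ContinuousAt (fun r : EuclideanSpace ℝ (Fin 3) =>
        Real.sin ((ν + 1 / 2) * Real.arccos (-1 + 2 * ρ ^ 2 * ‖r - r'‖ ^ 2
          / ((‖r‖ ^ 2 + ρ ^ 2) * (‖r'‖ ^ 2 + ρ ^ 2))))) r' :=
      Real.continuous_sin.continuousAt.comp
        ((continuousAt_const.mul (Real.continuous_arccos.continuousAt.comp h3)))
    exact (continuousAt_const.mul (h1.div h2 hsd)).mul h4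
  have hval : g r' = -1 / (4 * Real.pi) := by
    simp only [hg, sub_self, norm_zero, hQ]
    rw [Real.sqrt_sq hcpos.le, Real.sqrt_mul_self hcpos.le]
    have : (0:ℝ) ^ 2 = 0 := by norm_num
    rw [this]
    simp only [mul_zero, zero_mul, zero_div, add_zero]
    rw [Real.arccos_neg_one]
    have hs : Real.sin ((ν + 1 / 2) * Real.pi) = Real.cos (Real.pi * ν) := by
      have : (ν + 1 / 2) * Real.pi = Real.pi * ν + Real.pi / 2 := by ring
      rw [this, Real.sin_add, Real.sin_pi_div_two, Real.cos_pi_div_two]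
      ring
    rw [hs]
    field_simp
  have := (hcont.continuousWithinAt (s := {r'}ᶜ)).tendsto
  rw [hval] at this
  exact this.congr' (Filter.eventuallyEq_of_mem self_mem_nhdsWithin
    (fun r hr => (heq r hr).symm))
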